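/- Let I : (0,1) → (0,1) be nondecreasing. Then the functional ρ(f) = ‖f‖_{m_I} = sup_{0<t<1} I(t) f^*(t) on M_+(0,1) is a rearrangement-invariant quasinorm — i.e., ρ(f) = 0 iff f = 0 a.e.; ρ(af) = a·ρ(f) for a ≥ 0; there exists C ≥ 1 with ρ(f+g) ≤ C·(ρ(f)+ρ(g)) for all f,g ∈ M_+(0,1); f ≤ g a.e. implies ρ(f) ≤ ρ(g); f_n ↑ f a.e. implies ρ(f_n) ↑ ρ(f); ρ(χ_{(0,1)}) < ∞; and ρ(f) = ρ(f^*) — if and only if I ∈ Δ₂. -/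

import Mathlib

open MeasureTheory Set Filter
open scoped ENNReal

noncomputable section

/-- The nonincreasing rearrangement of `f` over `(0,1)`. -/
def rearr (f : ℝ → ℝ≥0∞) (t : ℝ) : ℝ≥0∞ :=
  sInf {l : ℝ≥0∞ | volume {s ∈ Set.Ioo (0:ℝ) 1 | l < f s} ≤ ENNReal.ofReal t}

/-- The maximal nonincreasing rearrangement `f^{**}(t) = (1/t) ∫_0^t f^*(s) ds`. -/
def dstar (f : ℝ → ℝ≥0∞) (t : ℝ) : ℝ≥0∞ :=
  (ENNReal.ofReal t)⁻¹ * ∫⁻ s in Set.Ioo (0:ℝ) t, rearr f s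

/-- The `L¹(0,1)` norm. -/
def lOne (f : ℝ → ℝ≥0∞) : ℝ≥0∞ := ∫⁻ t in Set.Ioo (0:ℝ) 1, f t

/-- The norm of the Marcinkiewicz-type space `m_I`. -/
def mNorm (I : ℝ → ℝ) (f : ℝ → ℝ≥0∞) : ℝ≥0∞ :=
  ⨆ t ∈ Set.Ioo (0:ℝ) 1, ENNReal.ofReal (I t) * rearr f t

/-- The norm of `m_Ĩ` where `Ĩ(t) = t / I(t)`. -/
def mNormTilde (I : ℝ → ℝ) (f : ℝ → ℝ≥0∞) : ℝ≥0∞ :=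
  ⨆ t ∈ Set.Ioo (0:ℝ) 1, ENNReal.ofReal (t / I t) * rearr f t

/-- The supremum operator `S_I f(t) = (1/I(t)) sup_{0<s≤t} I(s) f^*(s)`. -/
def SI (I : ℝ → ℝ) (f : ℝ → ℝ≥0∞) : ℝ → ℝ≥0∞ := fun t =>
  (ENNReal.ofReal (I t))⁻¹ * ⨆ s ∈ Set.Ioc (0:ℝ) t, ENNReal.ofReal (I s) * rearr f s

/-- The supremum operator `T_I f(t) = (I(t)/t) sup_{t≤s<1} (s/I(s)) f^*(s)`. -/
def TI (I : ℝ → ℝ) (f : ℝ → ℝ≥0∞) : ℝ → ℝ≥0∞ := fun t =>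
  ENNReal.ofReal (I t / t) * ⨆ s ∈ Set.Ico t 1, ENNReal.ofReal (s / I s) * rearr f s

/-- `H_I f(t) = ∫_t^1 f(s)/I(s) ds`. -/
def HI (I : ℝ → ℝ) (f : ℝ → ℝ≥0∞) : ℝ → ℝ≥0∞ := fun t =>
  ∫⁻ s in Set.Ioo t 1, f s / ENNReal.ofReal (I s)

/-- `R_I f(t) = (1/I(t)) ∫_0^t f(s) ds`. -/
def RI (I : ℝ → ℝ) (f : ℝ → ℝ≥0∞) : ℝ → ℝ≥0∞ := fun t =>
  (ENNReal.ofReal (I t))⁻¹ * ∫⁻ s in Set.Ioo (0:ℝ) t, f s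

/-- `I : (0,1) → (0,1)` is quasiconcave: a nondecreasing bijection of `(0,1)` onto `(0,1)`
with `I(t)/t` nonincreasing, `I(0+) = 0` and `I(1-) = 1`. -/
def Quasiconcave (I : ℝ → ℝ) : Prop :=
  Set.BijOn I (Set.Ioo 0 1) (Set.Ioo 0 1) ∧
  MonotoneOn I (Set.Ioo 0 1) ∧
  AntitoneOn (fun t => I t / t) (Set.Ioo 0 1) ∧
  Tendsto I (nhdsWithin 0 (Set.Ioo 0 1)) (nhds 0) ∧
  Tendsto I (nhdsWithin 1 (Set.Ioo 0 1)) (nhds 1)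

/-- Condition (★): `∫_0^t I(s)/s ds ≲ I(t)`. -/
def StarCond (I : ℝ → ℝ) : Prop :=
  ∃ C : ℝ, 0 < C ∧ ∀ t ∈ Set.Ioo (0:ℝ) 1,
    ∫⁻ s in Set.Ioo (0:ℝ) t, ENNReal.ofReal (I s / s) ≤ ENNReal.ofReal (C * I t)

/-- The average property: `∫_0^t ds/I(s) ≲ t/I(t)`. -/
def AvgProp (I : ℝ → ℝ) : Prop :=
  ∃ C : ℝ, 0 < C ∧ ∀ t ∈ Set.Ioo (0:ℝ) 1,
    ∫⁻ s in Set.Ioo (0:ℝ) t, ENNReal.ofReal (1 / I s) ≤ ENNReal.ofReal (C * (t / I t))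

/-- The condition `∫_t^1 I(s)/s² ds ≲ (1/t) ∫_0^t I(s)/s ds`. -/
def MaxCond (I : ℝ → ℝ) : Prop :=
  ∃ C : ℝ, 0 < C ∧ ∀ t ∈ Set.Ioo (0:ℝ) 1,
    ∫⁻ s in Set.Ioo t 1, ENNReal.ofReal (I s / s ^ 2) ≤
      ENNReal.ofReal (C / t) * ∫⁻ s in Set.Ioo (0:ℝ) t, ENNReal.ofReal (I s / s)

/-- The class `𝒬` of quasiconcave functions. -/
def ClassQ (I : ℝ → ℝ) : Prop :=
  Quasiconcave I ∧ StarCond I ∧ AvgProp I ∧ MaxCond I ∧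
  ∃ c d : ℝ,
    IsLUB {l : ℝ | 0 ≤ l ∧ ∀ t ∈ Set.Ioo (0:ℝ) 1,
      ENNReal.ofReal (l * (I t / t ^ 2 - 1)) ≤
        ∫⁻ s in Set.Ioo t 1, ENNReal.ofReal (I s / s ^ 3)} c ∧
    IsLeast {e : ℝ | 0 < e ∧ ∀ t ∈ Set.Ioo (0:ℝ) 1,
      ∫⁻ s in Set.Ioo t 1, ENNReal.ofReal (I s / s ^ 2) ≤
        ENNReal.ofReal (e * (I t / t))} d ∧
    (1 - c) * d ≤ c

/-- The `Δ₂` condition: `I(2t) ≤ C I(t)` for `t ∈ (0,1/2)`. -/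
def Delta2 (I : ℝ → ℝ) : Prop :=
  ∃ C : ℝ, 0 < C ∧ ∀ t ∈ Set.Ioo (0:ℝ) (1/2), I (2 * t) ≤ C * I t

/-- A rearrangement-invariant Banach function norm on `M₊(0,1)`. -/
def IsRiNorm (ρ : (ℝ → ℝ≥0∞) → ℝ≥0∞) : Prop :=
  (∀ f : ℝ → ℝ≥0∞, Measurable f →
      (ρ f = 0 ↔ f =ᵐ[volume.restrict (Set.Ioo (0:ℝ) 1)] 0)) ∧
  (∀ f : ℝ → ℝ≥0∞, Measurable f → ∀ a : ℝ, 0 ≤ a →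
      ρ (fun t => ENNReal.ofReal a * f t) = ENNReal.ofReal a * ρ f) ∧
  (∀ f g : ℝ → ℝ≥0∞, Measurable f → Measurable g →
      ρ (fun t => f t + g t) ≤ ρ f + ρ g) ∧
  (∀ f g : ℝ → ℝ≥0∞, Measurable f → Measurable g →
      (∀ᵐ t ∂(volume.restrict (Set.Ioo (0:ℝ) 1)), f t ≤ g t) → ρ f ≤ ρ g) ∧
  (∀ (fn : ℕ → ℝ → ℝ≥0∞) (f : ℝ → ℝ≥0∞), (∀ n, Measurable (fn n)) → Measurable f →
      (∀ᵐ t ∂(volume.restrict (Set.Ioo (0:ℝ) 1)), Monotone (fun n => fn n t)) →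
      (∀ᵐ t ∂(volume.restrict (Set.Ioo (0:ℝ) 1)), (⨆ n, fn n t) = f t) →
      (⨆ n, ρ (fn n)) = ρ f) ∧
  (ρ (fun _ => 1) < ⊤) ∧
  (∃ c : ℝ, 0 < c ∧ ∀ f : ℝ → ℝ≥0∞, Measurable f →
      ∫⁻ t in Set.Ioo (0:ℝ) 1, f t ≤ ENNReal.ofReal c * ρ f) ∧
  (∀ f : ℝ → ℝ≥0∞, Measurable f → ρ f = ρ (rearr f))

/-- The associate norm `ρ'`. -/
def assoc (ρ : (ℝ → ℝ≥0∞) → ℝ≥0∞) (f : ℝ → ℝ≥0∞) : ℝ≥0∞ :=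
  ⨆ (g : ℝ → ℝ≥0∞) (_ : Measurable g ∧ ρ g ≤ 1),
    ∫⁻ t in Set.Ioo (0:ℝ) 1, f t * g t

/-- The optimal target norm `‖f‖_{Y_X}` of the r.i. norm `ρ = ‖·‖_X` under `H_I`. -/
def optTargetNorm (I : ℝ → ℝ) (ρ : (ℝ → ℝ≥0∞) → ℝ≥0∞) (f : ℝ → ℝ≥0∞) : ℝ≥0∞ :=
  ⨆ (g : ℝ → ℝ≥0∞) (_ : Measurable g ∧ assoc ρ (RI I (rearr g)) ≤ 1),
    ∫⁻ t in Set.Ioo (0:ℝ) 1, rearr f t * rearr g t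

/-- The optimal domain norm `‖f‖_{X_Y} = sup_{h ∼ f} ‖H_I h‖_Y`. -/
def optDomainNorm (I : ℝ → ℝ) (ρY : (ℝ → ℝ≥0∞) → ℝ≥0∞) (f : ℝ → ℝ≥0∞) : ℝ≥0∞ :=
  ⨆ (h : ℝ → ℝ≥0∞)
    (_ : Measurable h ∧ ∀ t ∈ Set.Ioo (0:ℝ) 1, rearr h t = rearr f t),
      ρY (HI I h)

/-- `H_I : X → Y` boundedly. -/
def HIBounded (I : ℝ → ℝ) (ρX ρY : (ℝ → ℝ≥0∞) → ℝ≥0∞) : Prop :=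
  ∃ C : ℝ, 0 < C ∧ ∀ f : ℝ → ℝ≥0∞, Measurable f →
    ρY (HI I f) ≤ ENNReal.ofReal C * ρX f

/-- `X` is the optimal domain space for `Y` under `H_I`. -/
def IsOptimalDomain (I : ℝ → ℝ) (ρX ρY : (ℝ → ℝ≥0∞) → ℝ≥0∞) : Prop :=
  HIBounded I ρX ρY ∧
  ∀ ρZ : (ℝ → ℝ≥0∞) → ℝ≥0∞, IsRiNorm ρZ → HIBounded I ρZ ρY →
    ∃ C : ℝ, 0 < C ∧ ∀ f : ℝ → ℝ≥0∞, Measurable f →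
      ρX f ≤ ENNReal.ofReal C * ρZ f

/-- `Y` is the optimal target space for `X` under `H_I`. -/
def IsOptimalTarget (I : ℝ → ℝ) (ρX ρY : (ℝ → ℝ≥0∞) → ℝ≥0∞) : Prop :=
  HIBounded I ρX ρY ∧
  ∀ ρZ : (ℝ → ℝ≥0∞) → ℝ≥0∞, IsRiNorm ρZ → HIBounded I ρX ρZ →
    ∃ C : ℝ, 0 < C ∧ ∀ f : ℝ → ℝ≥0∞, Measurable f →
      ρZ f ≤ ENNReal.ofReal C * ρY f

namespace Stmt3

def df (f : ℝ → ℝ≥0∞) (l : ℝ≥0∞) : ℝ≥0∞ := volume {s ∈ Set.Ioo (0:ℝ) 1 | l < f s}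

lemma rearr_def (f : ℝ → ℝ≥0∞) (t : ℝ) :
    rearr f t = sInf {l : ℝ≥0∞ | df f l ≤ ENNReal.ofReal t} := rfl

lemma df_antitone (f : ℝ → ℝ≥0∞) : Antitone (df f) := fun a b hab =>
  measure_mono (fun s hs => ⟨hs.1, lt_of_le_of_lt hab hs.2⟩)

lemma rearr_le {f : ℝ → ℝ≥0∞} {t : ℝ} {l : ℝ≥0∞} (h : df f l ≤ ENNReal.ofReal t) :
    rearr f t ≤ l := sInf_le h

lemma df_le_of_rearr_lt {f : ℝ → ℝ≥0∞} {t : ℝ} {l : ℝ≥0∞} (h : rearr f t < l) :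
    df f l ≤ ENNReal.ofReal t := by
  obtain ⟨a, ha, hal⟩ := sInf_lt_iff.mp h
  exact le_trans (df_antitone f hal.le) ha

lemma rearr_antitone (f : ℝ → ℝ≥0∞) : Antitone (rearr f) := fun a b hab =>
  sInf_le_sInf (fun l hl => le_trans hl (ENNReal.ofReal_le_ofReal hab))

lemma df_mono_ae {f g : ℝ → ℝ≥0∞}
    (h : ∀ᵐ t ∂(volume.restrict (Set.Ioo (0:ℝ) 1)), f t ≤ g t) (l : ℝ≥0∞) :
    df f l ≤ df g l := by
  rw [ae_restrict_iff' measurableSet_Ioo] at h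
  refine measure_mono_ae ?_
  filter_upwards [h] with s hs ⟨h1, h2⟩
  exact ⟨h1, lt_of_lt_of_le h2 (hs h1)⟩

lemma rearr_mono_ae {f g : ℝ → ℝ≥0∞}
    (h : ∀ᵐ t ∂(volume.restrict (Set.Ioo (0:ℝ) 1)), f t ≤ g t) (t : ℝ) :
    rearr f t ≤ rearr g t :=
  sInf_le_sInf (fun l hl => le_trans (df_mono_ae h l) hl)

/-- near right-continuity: if `rearr f t' ≤ l` for all `t' ∈ (t,1)` and `0 ≤ t < 1`
then `rearr f t ≤ l`. -/
lemma rearr_right_cont {f : ℝ → ℝ≥0∞} {t : ℝ} (ht0 : 0 ≤ t) (ht1 : t < 1)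
    {l : ℝ≥0∞} (h : ∀ t' ∈ Set.Ioo t 1, rearr f t' ≤ l) : rearr f t ≤ l := by
  refine le_of_forall_gt_imp_ge_of_dense (fun c hc => ?_)
  refine rearr_le ?_
  refine ENNReal.le_of_forall_pos_le_add (fun ε hε _ => ?_)
  obtain ⟨t', ht'⟩ : ∃ t', t' ∈ Set.Ioo t 1 ∧ t' ≤ t + (ε : ℝ) := by
    have hε' : (0:ℝ) < ε := hε
    refine ⟨min (t + (ε:ℝ)/2) ((t+1)/2), ⟨?_, ?_⟩, ?_⟩
    · apply lt_min (by linarith) (by linarith)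
    · exact lt_of_le_of_lt (min_le_right _ _) (by linarith)
    · refine le_trans (min_le_left _ _) (by linarith)
  calc df f c ≤ ENNReal.ofReal t' := df_le_of_rearr_lt (lt_of_le_of_lt (h t' ht'.1) hc)
    _ ≤ ENNReal.ofReal (t + (ε:ℝ)) := ENNReal.ofReal_le_ofReal ht'.2
    _ ≤ ENNReal.ofReal t + ENNReal.ofReal (ε:ℝ) := ENNReal.ofReal_add_le
    _ = ENNReal.ofReal t + (ε : ℝ≥0∞) := by rw [ENNReal.ofReal_coe_nnreal]

/-- rearr of rearr -/
lemma rearr_rearr (f : ℝ → ℝ≥0∞) {t : ℝ} (ht : t ∈ Set.Ioo (0:ℝ) 1) :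
    rearr (rearr f) t = rearr f t := by
  apply le_antisymm
  · apply rearr_le
    calc df (rearr f) (rearr f t) ≤ volume (Set.Ioo 0 t) := measure_mono ?_
      _ = ENNReal.ofReal t := Real.volume_Ioo.trans (by rw [sub_zero])
    rintro s ⟨hs, hlt⟩
    refine ⟨hs.1, ?_⟩
    by_contra h
    exact absurd (rearr_antitone f (not_lt.mp h)) (not_le.mpr hlt)
  · refine le_sInf (fun l hl => ?_)
    refine rearr_right_cont ht.1.le ht.2 (fun t' ht' => ?_)
    by_contra h
    push_neg at h
    have hsub : Set.Ioo (0:ℝ) t' ⊆ {s ∈ Set.Ioo (0:ℝ) 1 | l < rearr f s} := by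
      intro s hs
      exact ⟨⟨hs.1, hs.2.trans ht'.2⟩, lt_of_lt_of_le h (rearr_antitone f hs.2.le)⟩
    have : ENNReal.ofReal t' ≤ ENNReal.ofReal t := by
      calc ENNReal.ofReal t' = volume (Set.Ioo (0:ℝ) t') := by
            rw [Real.volume_Ioo, sub_zero]
        _ ≤ df (rearr f) l := measure_mono hsub
        _ ≤ ENNReal.ofReal t := hl
    have := (ENNReal.ofReal_le_ofReal_iff ht.1.le).mp this
    linarith [ht'.1]

lemma df_const_mul (f : ℝ → ℝ≥0∞) {c : ℝ≥0∞} (hc0 : c ≠ 0) (hct : c ≠ ⊤) (l : ℝ≥0∞) :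
    df (fun s => c * f s) l = df f (l / c) := by
  unfold df
  congr 1
  ext s
  simp only [Set.mem_setOf_eq, Set.mem_sep_iff]
  constructor
  · rintro ⟨h1, h2⟩
    exact ⟨h1, (ENNReal.div_lt_iff (Or.inl hc0) (Or.inl hct)).mpr (by rwa [mul_comm])⟩
  · rintro ⟨h1, h2⟩
    refine ⟨h1, ?_⟩
    have := (ENNReal.div_lt_iff (Or.inl hc0) (Or.inl hct)).mp h2
    rwa [mul_comm] at this

lemma rearr_const_mul (f : ℝ → ℝ≥0∞) {c : ℝ≥0∞} (hc0 : c ≠ 0) (hct : c ≠ ⊤) (t : ℝ) :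
    rearr (fun s => c * f s) t = c * rearr f t := by
  apply le_antisymm
  · refine le_of_forall_gt_imp_ge_of_dense (fun b hb => ?_)
    have h1 : rearr f t < b / c := by
      rw [ENNReal.lt_div_iff_mul_lt (Or.inl hc0) (Or.inl hct), mul_comm]
      exact hb
    refine rearr_le ?_
    rw [df_const_mul f hc0 hct]
    exact df_le_of_rearr_lt h1
  · refine le_of_forall_gt_imp_ge_of_dense (fun b hb => ?_)
    have h1 : df f (b / c) ≤ ENNReal.ofReal t := by
      rw [← df_const_mul f hc0 hct]
      exact df_le_of_rearr_lt hb
    calc c * rearr f t ≤ c * (b / c) := mul_le_mul_right (rearr_le h1) c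
      _ ≤ b := ENNReal.mul_div_le

lemma rearr_zero_fun (t : ℝ) : rearr (fun _ => (0:ℝ≥0∞)) t = 0 := by
  refine le_antisymm (rearr_le ?_) (zero_le)
  have : {s ∈ Set.Ioo (0:ℝ) 1 | (0:ℝ≥0∞) < (fun _ => (0:ℝ≥0∞)) s} = ∅ := by
    ext s; simp
  unfold df
  rw [this, measure_empty]
  exact zero_le

lemma rearr_add_le (f g : ℝ → ℝ≥0∞) {t : ℝ} (ht : 0 ≤ t) :
    rearr (fun s => f s + g s) t ≤ rearr f (t/2) + rearr g (t/2) := by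
  set a := rearr f (t/2) with ha
  set b := rearr g (t/2) with hb
  refine ENNReal.le_of_forall_pos_le_add (fun ε hε hab => ?_)
  have haT : a ≠ ⊤ := fun h => by simp [h] at hab
  have hbT : b ≠ ⊤ := fun h => by simp [h] at hab
  have hε2 : ((ε:ℝ≥0∞)/2) ≠ 0 := by
    simp [ENNReal.div_eq_zero_iff, hε.ne']
  have h1 : a < a + (ε:ℝ≥0∞)/2 := ENNReal.lt_add_right haT hε2
  have h2 : b < b + (ε:ℝ≥0∞)/2 := ENNReal.lt_add_right hbT hε2
  have hsub : {s ∈ Set.Ioo (0:ℝ) 1 | (a + (ε:ℝ≥0∞)/2) + (b + (ε:ℝ≥0∞)/2) < f s + g s}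
      ⊆ {s ∈ Set.Ioo (0:ℝ) 1 | a + (ε:ℝ≥0∞)/2 < f s} ∪
        {s ∈ Set.Ioo (0:ℝ) 1 | b + (ε:ℝ≥0∞)/2 < g s} := by
    rintro s ⟨hs, hlt⟩
    by_cases hf : a + (ε:ℝ≥0∞)/2 < f s
    · exact Or.inl ⟨hs, hf⟩
    · refine Or.inr ⟨hs, ?_⟩
      by_contra hg
      push_neg at hf hg
      exact absurd (add_le_add hf hg) (not_le.mpr hlt)
  have hdf : df (fun s => f s + g s) ((a + (ε:ℝ≥0∞)/2) + (b + (ε:ℝ≥0∞)/2))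
      ≤ ENNReal.ofReal t := by
    calc df (fun s => f s + g s) ((a + (ε:ℝ≥0∞)/2) + (b + (ε:ℝ≥0∞)/2))
        ≤ volume ({s ∈ Set.Ioo (0:ℝ) 1 | a + (ε:ℝ≥0∞)/2 < f s} ∪
          {s ∈ Set.Ioo (0:ℝ) 1 | b + (ε:ℝ≥0∞)/2 < g s}) := measure_mono hsub
      _ ≤ df f (a + (ε:ℝ≥0∞)/2) + df g (b + (ε:ℝ≥0∞)/2) := measure_union_le _ _
      _ ≤ ENNReal.ofReal (t/2) + ENNReal.ofReal (t/2) :=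
          add_le_add (df_le_of_rearr_lt h1) (df_le_of_rearr_lt h2)
      _ = ENNReal.ofReal t := by
          rw [← ENNReal.ofReal_add (by linarith) (by linarith), add_halves]
  have := rearr_le hdf
  calc rearr (fun s => f s + g s) t ≤ (a + (ε:ℝ≥0∞)/2) + (b + (ε:ℝ≥0∞)/2) := this
    _ = a + b + ((ε:ℝ≥0∞)/2 + (ε:ℝ≥0∞)/2) := by ring
    _ = a + b + (ε:ℝ≥0∞) := by rw [ENNReal.add_halves]


lemma df_sup {fn : ℕ → ℝ → ℝ≥0∞} {f : ℝ → ℝ≥0∞} (hn : ∀ n, Measurable (fn n))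
    (hae : ∀ᵐ x ∂(volume : Measure ℝ),
      x ∈ Set.Ioo (0:ℝ) 1 → (Monotone (fun n => fn n x) ∧ (⨆ n, fn n x) = f x))
    (l : ℝ≥0∞) : df f l = ⨆ n, df (fn n) l := by
  set N := toMeasurable volume {x : ℝ | ¬(x ∈ Set.Ioo (0:ℝ) 1 →
    (Monotone (fun n => fn n x) ∧ (⨆ n, fn n x) = f x))} with hN
  have hNnull : volume N = 0 := by
    rw [hN, measure_toMeasurable]
    exact hae
  have hNsub : ∀ x ∉ N, x ∈ Set.Ioo (0:ℝ) 1 →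
      Monotone (fun n => fn n x) ∧ (⨆ n, fn n x) = f x := by
    intro x hx
    by_contra h
    exact hx (subset_toMeasurable _ _ h)
  set En : ℕ → Set ℝ := fun n => {s ∈ Set.Ioo (0:ℝ) 1 | l < fn n s} \ N with hEn
  have hmonoE : Monotone En := by
    intro n m hnm s hs
    obtain ⟨⟨hs1, hs2⟩, hsN⟩ := hs
    exact ⟨⟨hs1, lt_of_lt_of_le hs2 ((hNsub s hsN hs1).1 hnm)⟩, hsN⟩
  have hunion : (⋃ n, En n) = {s ∈ Set.Ioo (0:ℝ) 1 | l < f s} \ N := by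
    ext s
    simp only [hEn, Set.mem_iUnion, Set.mem_diff, Set.mem_sep_iff]
    constructor
    · rintro ⟨n, ⟨⟨h1, h2⟩, h3⟩⟩
      refine ⟨⟨h1, ?_⟩, h3⟩
      have := (hNsub s h3 h1).2
      exact lt_of_lt_of_le h2 (this ▸ le_iSup (fun n => fn n s) n)
    · rintro ⟨⟨h1, h2⟩, h3⟩
      have := (hNsub s h3 h1).2
      rw [← this] at h2
      obtain ⟨n, hn2⟩ := lt_iSup_iff.mp h2
      exact ⟨n, ⟨⟨h1, hn2⟩, h3⟩⟩
  calc df f l = volume ({s ∈ Set.Ioo (0:ℝ) 1 | l < f s} \ N) :=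
        (measure_diff_null hNnull).symm
    _ = volume (⋃ n, En n) := by rw [hunion]
    _ = ⨆ n, volume (En n) := hmonoE.measure_iUnion
    _ = ⨆ n, df (fn n) l := by
        refine iSup_congr (fun n => ?_)
        exact measure_diff_null hNnull

lemma rearr_fatou {fn : ℕ → ℝ → ℝ≥0∞} {f : ℝ → ℝ≥0∞} (hn : ∀ n, Measurable (fn n))
    (hae : ∀ᵐ x ∂(volume : Measure ℝ),
      x ∈ Set.Ioo (0:ℝ) 1 → (Monotone (fun n => fn n x) ∧ (⨆ n, fn n x) = f x))
    (t : ℝ) : (⨆ n, rearr (fn n) t) = rearr f t := by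
  apply le_antisymm
  · refine iSup_le (fun n => ?_)
    refine sInf_le_sInf (fun l hl => ?_)
    calc df (fn n) l ≤ ⨆ m, df (fn m) l := le_iSup (fun m => df (fn m) l) n
      _ = df f l := (df_sup hn hae l).symm
      _ ≤ ENNReal.ofReal t := hl
  · refine le_of_forall_gt_imp_ge_of_dense (fun b hb => ?_)
    refine rearr_le ?_
    rw [df_sup hn hae b]
    exact iSup_le fun n => df_le_of_rearr_lt
      (lt_of_le_of_lt (le_iSup (fun m => rearr (fn m) t) n) hb)

lemma rearr_eq_zero_of_ae {f : ℝ → ℝ≥0∞}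
    (h : f =ᵐ[volume.restrict (Set.Ioo (0:ℝ) 1)] 0) (t : ℝ) : rearr f t = 0 := by
  refine le_antisymm (rearr_le ?_) (zero_le)
  have h' : ∀ᵐ x ∂(volume : Measure ℝ), x ∈ Set.Ioo (0:ℝ) 1 → f x = 0 :=
    (ae_restrict_iff' measurableSet_Ioo).mp h
  have : df f 0 = 0 := by
    refine measure_mono_null ?_ h'
    rintro s ⟨hs1, hs2⟩
    simp only [Set.mem_compl_iff, Set.mem_setOf_eq]
    exact fun hc => absurd (hc hs1) (by simpa using hs2.ne')
  rw [this]
  exact zero_le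

lemma df_eq_zero_of_rearr_zero {f : ℝ → ℝ≥0∞}
    (h : ∀ t ∈ Set.Ioo (0:ℝ) 1, rearr f t = 0) {l : ℝ≥0∞} (hl : l ≠ 0) :
    df f l = 0 := by
  have key : ∀ t ∈ Set.Ioo (0:ℝ) 1, df f l ≤ ENNReal.ofReal t := by
    intro t ht
    exact df_le_of_rearr_lt ((h t ht) ▸ pos_iff_ne_zero.mpr hl)
  have : df f l ≤ 0 := by
    refine ENNReal.le_of_forall_pos_le_add (fun ε hε _ => ?_)
    have hε' : (0:ℝ) < ε := hε
    have ht : min (ε:ℝ) (1/2) ∈ Set.Ioo (0:ℝ) 1 := by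
      constructor
      · exact lt_min hε' (by norm_num)
      · exact lt_of_le_of_lt (min_le_right _ _) (by norm_num)
    calc df f l ≤ ENNReal.ofReal (min (ε:ℝ) (1/2)) := key _ ht
      _ ≤ ENNReal.ofReal (ε:ℝ) := ENNReal.ofReal_le_ofReal (min_le_left _ _)
      _ = (ε : ℝ≥0∞) := ENNReal.ofReal_coe_nnreal
      _ = 0 + (ε : ℝ≥0∞) := (zero_add _).symm
  exact le_antisymm this (zero_le)

lemma ae_zero_of_rearr_zero {f : ℝ → ℝ≥0∞}
    (h : ∀ t ∈ Set.Ioo (0:ℝ) 1, rearr f t = 0) :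
    f =ᵐ[volume.restrict (Set.Ioo (0:ℝ) 1)] 0 := by
  rw [Filter.EventuallyEq, ae_iff, Measure.restrict_apply' measurableSet_Ioo]
  have hnull : volume (⋃ n : ℕ, {s ∈ Set.Ioo (0:ℝ) 1 | ((n : ℝ≥0∞))⁻¹ < f s}) = 0 := by
    refine measure_iUnion_null (fun n => ?_)
    exact df_eq_zero_of_rearr_zero h (ENNReal.inv_ne_zero.mpr (ENNReal.natCast_ne_top n))
  refine measure_mono_null (fun x hx => ?_) hnull
  obtain ⟨hx1, hx2⟩ := hx
  obtain ⟨n, hn⟩ := ENNReal.exists_inv_nat_lt (show f x ≠ 0 by simpa using hx1)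
  exact Set.mem_iUnion.mpr ⟨n, hx2, hn⟩

section Ind

def ind (u v : ℝ) : ℝ → ℝ≥0∞ := (Set.Ioc u v).indicator (fun _ => (1:ℝ≥0∞))

lemma ind_measurable (u v : ℝ) : Measurable (ind u v) :=
  (measurable_const).indicator measurableSet_Ioc

lemma ind_le_one (u v : ℝ) (s : ℝ) : ind u v s ≤ 1 := by
  unfold ind
  by_cases h : s ∈ Set.Ioc u v <;> simp [h]

lemma rearr_ind_le_one (u v : ℝ) {τ : ℝ} (hτ : 0 ≤ τ) : rearr (ind u v) τ ≤ 1 := by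
  refine rearr_le ?_
  have : {s ∈ Set.Ioo (0:ℝ) 1 | 1 < ind u v s} = ∅ := by
    ext s
    simp only [Set.mem_sep_iff, Set.mem_empty_iff_false, iff_false, not_and, not_lt]
    exact fun _ => ind_le_one u v s
  unfold df
  rw [this, measure_empty]
  exact zero_le

lemma rearr_ind_eq_zero {u v : ℝ} (huv : u ≤ v) {τ : ℝ} (hτ : v - u ≤ τ) :
    rearr (ind u v) τ = 0 := by
  refine le_antisymm (rearr_le ?_) (zero_le)
  calc df (ind u v) 0 ≤ volume (Set.Ioc u v) := by
        refine measure_mono ?_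
        rintro s ⟨hs1, hs2⟩
        by_contra hc
        rw [ind, Set.indicator_of_notMem hc] at hs2
        exact absurd hs2 (lt_irrefl 0)
    _ = ENNReal.ofReal (v - u) := Real.volume_Ioc
    _ ≤ ENNReal.ofReal τ := ENNReal.ofReal_le_ofReal hτ

lemma one_le_rearr_ind {w : ℝ} (hw0 : 0 < w) (hw1 : w ≤ 1) {τ : ℝ} (hτ : 0 ≤ τ)
    (hτw : τ < w) : 1 ≤ rearr (ind 0 w) τ := by
  refine le_sInf (fun l hl => ?_)
  by_contra hc
  push_neg at hc
  have hsub : Set.Ioo (0:ℝ) w ⊆ {s ∈ Set.Ioo (0:ℝ) 1 | l < ind 0 w s} := by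
    intro s hs
    refine ⟨⟨hs.1, lt_of_lt_of_le hs.2 hw1⟩, ?_⟩
    rw [ind, Set.indicator_of_mem (show s ∈ Set.Ioc (0:ℝ) w from ⟨hs.1, hs.2.le⟩)]
    exact hc
  have : ENNReal.ofReal w ≤ ENNReal.ofReal τ := by
    calc ENNReal.ofReal w = volume (Set.Ioo (0:ℝ) w) := by rw [Real.volume_Ioo, sub_zero]
      _ ≤ df (ind 0 w) l := measure_mono hsub
      _ ≤ ENNReal.ofReal τ := hl
  exact absurd this (not_le.mpr (ENNReal.ofReal_lt_ofReal_iff hw0 |>.mpr hτw))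

lemma ind_add {u v w : ℝ} (huv : u ≤ v) (hvw : v ≤ w) (x : ℝ) :
    ind u v x + ind v w x = ind u w x := by
  unfold ind
  rw [← Set.Ioc_union_Ioc_eq_Ioc huv hvw,
    Set.indicator_union_of_disjoint (Set.Ioc_disjoint_Ioc_of_le le_rfl) _]

end Ind

/-- upper bound for the mNorm of an indicator -/
lemma mNorm_ind_le (I : ℝ → ℝ) (hmono : MonotoneOn I (Set.Ioo 0 1))
    {u v : ℝ} (h0 : 0 ≤ u) (huv : u < v) (hd : v - u < 1) (hv1 : v ≤ 1) :
    mNorm I (ind u v) ≤ ENNReal.ofReal (I (v - u)) := by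
  refine iSup₂_le (fun τ hτ => ?_)
  by_cases hcase : v - u ≤ τ
  · rw [rearr_ind_eq_zero huv.le hcase, mul_zero]
    exact zero_le
  · push_neg at hcase
    calc ENNReal.ofReal (I τ) * rearr (ind u v) τ
        ≤ ENNReal.ofReal (I τ) * 1 := mul_le_mul_right (rearr_ind_le_one u v hτ.1.le) _
      _ = ENNReal.ofReal (I τ) := mul_one _
      _ ≤ ENNReal.ofReal (I (v - u)) := ENNReal.ofReal_le_ofReal
          (hmono hτ ⟨by linarith, hd⟩ hcase.le)

end Stmt3

/-- Proposition 3.1 / `prop:fact`.  For nondecreasing `I : (0,1) → (0,1)`,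
the functional `‖f‖_{m_I} = sup_{0<t<1} I(t) f^*(t)` is a rearrangement-invariant quasinorm
if and only if `I ∈ Δ₂`. -/
theorem statement3 (I : ℝ → ℝ) (hmono : MonotoneOn I (Set.Ioo 0 1))
    (hmaps : ∀ t ∈ Set.Ioo (0:ℝ) 1, I t ∈ Set.Ioo (0:ℝ) 1) :
    ((∀ f : ℝ → ℝ≥0∞, Measurable f →
        (mNorm I f = 0 ↔ f =ᵐ[volume.restrict (Set.Ioo (0:ℝ) 1)] 0)) ∧
     (∀ f : ℝ → ℝ≥0∞, Measurable f → ∀ a : ℝ, 0 ≤ a →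
        mNorm I (fun t => ENNReal.ofReal a * f t) = ENNReal.ofReal a * mNorm I f) ∧
     (∃ C : ℝ, 1 ≤ C ∧ ∀ f g : ℝ → ℝ≥0∞, Measurable f → Measurable g →
        mNorm I (fun t => f t + g t) ≤ ENNReal.ofReal C * (mNorm I f + mNorm I g)) ∧
     (∀ f g : ℝ → ℝ≥0∞, Measurable f → Measurable g →
        (∀ᵐ t ∂(volume.restrict (Set.Ioo (0:ℝ) 1)), f t ≤ g t) →
        mNorm I f ≤ mNorm I g) ∧
     (∀ (fn : ℕ → ℝ → ℝ≥0∞) (f : ℝ → ℝ≥0∞), (∀ n, Measurable (fn n)) → Measurable f →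
        (∀ᵐ t ∂(volume.restrict (Set.Ioo (0:ℝ) 1)), Monotone (fun n => fn n t)) →
        (∀ᵐ t ∂(volume.restrict (Set.Ioo (0:ℝ) 1)), (⨆ n, fn n t) = f t) →
        (⨆ n, mNorm I (fn n)) = mNorm I f) ∧
     (mNorm I (fun _ => 1) < ⊤) ∧
     (∀ f : ℝ → ℝ≥0∞, Measurable f → mNorm I f = mNorm I (rearr f)))
    ↔ Delta2 I := by
  constructor
  · rintro ⟨-, -, ⟨C, hC1, hC⟩, -, -, -, -⟩
    have key : ∀ t' : ℝ, 0 < t' → t' ≤ 1/2 → ∀ τ : ℝ, 0 < τ → τ < 2*t' →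
        I τ ≤ (2*C) * I t' := by
      intro t' ht'0 ht'h τ hτ0 hτlt
      have ht'1 : t' < 1 := by linarith
      have h2t' : 2*t' ≤ 1 := by linarith
      have hτ1 : τ < 1 := by linarith
      have hadd : (fun x => Stmt3.ind 0 t' x + Stmt3.ind t' (2*t') x)
          = Stmt3.ind 0 (2*t') := by
        funext x
        exact Stmt3.ind_add ht'0.le (by linarith) x
      have hlow : ENNReal.ofReal (I τ) ≤ mNorm I (Stmt3.ind 0 (2*t')) := by
        calc ENNReal.ofReal (I τ) = ENNReal.ofReal (I τ) * 1 := (mul_one _).symm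
          _ ≤ ENNReal.ofReal (I τ) * rearr (Stmt3.ind 0 (2*t')) τ :=
              mul_le_mul_right (Stmt3.one_le_rearr_ind (by linarith) h2t' hτ0.le
                (by linarith)) _
          _ ≤ mNorm I (Stmt3.ind 0 (2*t')) := le_iSup₂ (f := fun τ (_ : τ ∈ Set.Ioo (0:ℝ) 1)
              => ENNReal.ofReal (I τ) * rearr (Stmt3.ind 0 (2*t')) τ) τ ⟨hτ0, hτ1⟩
      have hupf : mNorm I (Stmt3.ind 0 t') ≤ ENNReal.ofReal (I t') := by
        have := Stmt3.mNorm_ind_le I hmono (le_refl (0:ℝ)) ht'0 (by linarith) ht'1.le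
        rwa [sub_zero] at this
      have hupg : mNorm I (Stmt3.ind t' (2*t')) ≤ ENNReal.ofReal (I t') := by
        have := Stmt3.mNorm_ind_le I hmono ht'0.le (by linarith) (by linarith) h2t'
        have h2 : 2*t' - t' = t' := by ring
        rwa [h2] at this
      have hIt' : 0 < I t' := (hmaps t' ⟨ht'0, ht'1⟩).1
      have hC0 : (0:ℝ) < C := by linarith
      have main : ENNReal.ofReal (I τ) ≤ ENNReal.ofReal (2*C*I t') := by
        calc ENNReal.ofReal (I τ) ≤ mNorm I (Stmt3.ind 0 (2*t')) := hlow
          _ = mNorm I (fun x => Stmt3.ind 0 t' x + Stmt3.ind t' (2*t') x) := by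
              rw [hadd]
          _ ≤ ENNReal.ofReal C * (mNorm I (Stmt3.ind 0 t') + mNorm I (Stmt3.ind t' (2*t')))
              := hC _ _ (Stmt3.ind_measurable _ _) (Stmt3.ind_measurable _ _)
          _ ≤ ENNReal.ofReal C * (ENNReal.ofReal (I t') + ENNReal.ofReal (I t')) :=
              mul_le_mul_right (add_le_add hupf hupg) _
          _ = ENNReal.ofReal (2*C*I t') := by
              rw [← ENNReal.ofReal_add hIt'.le hIt'.le, ← ENNReal.ofReal_mul hC0.le]
              ring_nf
      exact (ENNReal.ofReal_le_ofReal_iff (by positivity)).mp main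
    refine ⟨(2*C)*(2*C), by positivity, ?_⟩
    intro t ht
    obtain ⟨ht0, ht12⟩ := ht
    set t' := min (3*t/2) (1/2) with ht'def
    have ht'0 : 0 < t' := lt_min (by linarith) (by norm_num)
    have htt' : t < t' := lt_min (by linarith) ht12
    have ht'h : t' ≤ 1/2 := min_le_right _ _
    have ht'2t : t' < 2*t := lt_of_le_of_lt (min_le_left _ _) (by linarith)
    have h1 : I (2*t) ≤ (2*C) * I t' := key t' ht'0 ht'h (2*t) (by linarith) (by linarith)
    have h2 : I t' ≤ (2*C) * I t := key t ht0 (by linarith) t' ht'0 ht'2t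
    have hC0 : (0:ℝ) < C := by linarith
    calc I (2*t) ≤ (2*C) * I t' := h1
      _ ≤ (2*C) * ((2*C) * I t) := by nlinarith
      _ = (2*C)*(2*C) * I t := by ring
  · rintro ⟨C, hC0, hC⟩
    refine ⟨?_, ?_, ?_, ?_, ?_, ?_, ?_⟩
    · -- zero iff
      intro f hf
      constructor
      · intro h0
        refine Stmt3.ae_zero_of_rearr_zero (fun t ht => ?_)
        have hterm : ENNReal.ofReal (I t) * rearr f t ≤ mNorm I f :=
          le_iSup₂ (f := fun t (_ : t ∈ Set.Ioo (0:ℝ) 1)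
            => ENNReal.ofReal (I t) * rearr f t) t ht
        rw [h0, le_zero_iff] at hterm
        rcases mul_eq_zero.mp hterm with h | h
        · exact absurd h (by simp [ENNReal.ofReal_eq_zero, not_le, (hmaps t ht).1])
        · exact h
      · intro h0
        refine le_antisymm (iSup₂_le (fun t ht => ?_)) (zero_le)
        rw [Stmt3.rearr_eq_zero_of_ae h0 t, mul_zero]
    · -- homogeneity
      intro f hf a ha
      rcases eq_or_lt_of_le ha with h | h
      · simp only [← h, ENNReal.ofReal_zero, zero_mul]
        refine le_antisymm (iSup₂_le (fun t ht => ?_)) (zero_le)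
        rw [Stmt3.rearr_zero_fun, mul_zero]
      · have hc0 : ENNReal.ofReal a ≠ 0 := (ENNReal.ofReal_pos.mpr h).ne'
        have hct : ENNReal.ofReal a ≠ ⊤ := ENNReal.ofReal_ne_top
        unfold mNorm
        simp_rw [Stmt3.rearr_const_mul f hc0 hct]
        rw [eq_comm]
        simp only [ENNReal.mul_iSup]
        refine iSup_congr (fun t => iSup_congr (fun ht => by ring))
    · -- quasi-triangle
      refine ⟨max C 1, le_max_right _ _, fun f g hf hg => ?_⟩
      refine iSup₂_le (fun t ht => ?_)
      have ht2 : t/2 ∈ Set.Ioo (0:ℝ) (1/2) := ⟨by linarith [ht.1], by linarith [ht.2]⟩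
      have ht2' : t/2 ∈ Set.Ioo (0:ℝ) 1 := ⟨ht2.1, by linarith [ht2.2]⟩
      have hIle : I t ≤ C * I (t/2) := by
        have := hC (t/2) ht2
        rwa [show 2*(t/2) = t by ring] at this
      have hI2 : 0 ≤ I (t/2) := (hmaps _ ht2').1.le
      calc ENNReal.ofReal (I t) * rearr (fun s => f s + g s) t
          ≤ ENNReal.ofReal (C * I (t/2)) * (rearr f (t/2) + rearr g (t/2)) :=
            mul_le_mul' (ENNReal.ofReal_le_ofReal hIle) (Stmt3.rearr_add_le f g ht.1.le)
        _ = ENNReal.ofReal C * (ENNReal.ofReal (I (t/2)) * rearr f (t/2))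
            + ENNReal.ofReal C * (ENNReal.ofReal (I (t/2)) * rearr g (t/2)) := by
            rw [ENNReal.ofReal_mul hC0.le]
            ring
        _ ≤ ENNReal.ofReal C * mNorm I f + ENNReal.ofReal C * mNorm I g := by
            refine add_le_add (mul_le_mul_right ?_ _) (mul_le_mul_right ?_ _)
            · exact le_iSup₂ (f := fun τ (_ : τ ∈ Set.Ioo (0:ℝ) 1)
                => ENNReal.ofReal (I τ) * rearr f τ) (t/2) ht2'
            · exact le_iSup₂ (f := fun τ (_ : τ ∈ Set.Ioo (0:ℝ) 1)
                => ENNReal.ofReal (I τ) * rearr g τ) (t/2) ht2'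
        _ = ENNReal.ofReal C * (mNorm I f + mNorm I g) := by ring
        _ ≤ ENNReal.ofReal (max C 1) * (mNorm I f + mNorm I g) :=
            mul_le_mul_left (ENNReal.ofReal_le_ofReal (le_max_left _ _)) _
    · -- monotonicity
      intro f g hf hg h
      refine iSup₂_le (fun t ht => ?_)
      calc ENNReal.ofReal (I t) * rearr f t ≤ ENNReal.ofReal (I t) * rearr g t :=
            mul_le_mul_right (Stmt3.rearr_mono_ae h t) _
        _ ≤ mNorm I g := le_iSup₂ (f := fun τ (_ : τ ∈ Set.Ioo (0:ℝ) 1)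
            => ENNReal.ofReal (I τ) * rearr g τ) t ht
    · -- Fatou
      intro fn f hn hf hmon hsup
      have h1 := (ae_restrict_iff' measurableSet_Ioo).mp hmon
      have h2 := (ae_restrict_iff' measurableSet_Ioo).mp hsup
      have hae : ∀ᵐ x ∂(volume : Measure ℝ), x ∈ Set.Ioo (0:ℝ) 1 →
          (Monotone (fun n => fn n x) ∧ (⨆ n, fn n x) = f x) := by
        filter_upwards [h1, h2] with x hx1 hx2 hx
        exact ⟨hx1 hx, hx2 hx⟩
      unfold mNorm
      rw [iSup_comm]
      refine iSup_congr (fun t => ?_)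
      rw [iSup_comm]
      refine iSup_congr (fun ht => ?_)
      rw [← ENNReal.mul_iSup, Stmt3.rearr_fatou hn hae t]
    · -- finiteness on constant one
      have hle : mNorm I (fun _ => (1:ℝ≥0∞)) ≤ 1 := by
        refine iSup₂_le (fun t ht => ?_)
        have hr : rearr (fun _ => (1:ℝ≥0∞)) t ≤ 1 := by
          refine Stmt3.rearr_le ?_
          have hempty : {s ∈ Set.Ioo (0:ℝ) 1 | (1:ℝ≥0∞) < (fun _ => (1:ℝ≥0∞)) s} = ∅ := by
            ext s; simp
          unfold Stmt3.df
          rw [hempty, measure_empty]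
          exact zero_le
        calc ENNReal.ofReal (I t) * rearr (fun _ => (1:ℝ≥0∞)) t
            ≤ ENNReal.ofReal (I t) * 1 := mul_le_mul_right hr _
          _ ≤ 1 * 1 := mul_le_mul_left (ENNReal.ofReal_le_one.mpr (hmaps t ht).2.le) _
          _ = 1 := one_mul 1
      exact lt_of_le_of_lt hle ENNReal.one_lt_top
    · -- rearrangement invariance
      intro f hf
      unfold mNorm
      refine iSup_congr (fun t => iSup_congr (fun ht => ?_))
      rw [Stmt3.rearr_rearr f ht]
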